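/- arXiv:2004.00106 — 5 statements merged into one kernel-verified Lean document; each statement's English description precedes it below -/
import Mathlib

section
/- For every positive integer M and every real ν with 2M−1 < ν < 2M, the series β(−ν) = Σ_{k=0}^∞ (−1)^k/(−ν + k) is positive. -/
open Filter Finset

theorem beta_pos_of_mem_odd_even_interval (M : ℕ) (hM : 1 ≤ M) (ν : ℝ)
    (h1 : 2 * (M : ℝ) - 1 < ν) (h2 : ν < 2 * (M : ℝ)) (b : ℝ)
    (hb : Tendsto (fun N => ∑ k ∈ Finset.range N, (-1 : ℝ) ^ k / (-ν + k))
      atTop (nhds b)) : 0 < b := by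
  have hM1 : (1:ℝ) ≤ M := by exact_mod_cast hM
  set S : ℕ → ℝ := fun n => ∑ k ∈ Finset.range (2*n), (-1:ℝ)^k / (-ν + k) with hSdef
  have hpair : ∀ k : ℕ,
      0 < (-1:ℝ)^(2*k) / (-ν + (2*k:ℕ)) + (-1:ℝ)^(2*k+1) / (-ν + ((2*k+1:ℕ):ℝ)) := by
    intro k
    have hprod : 0 < (-ν + 2*(k:ℝ)) * (-ν + (2*(k:ℝ)+1)) := by
      rcases lt_or_ge k M with hk | hk
      · have hk' : (k:ℝ) + 1 ≤ M := by exact_mod_cast hk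
        nlinarith
      · have hk' : (M:ℝ) ≤ k := by exact_mod_cast hk
        nlinarith
    have ha : (-ν + 2*(k:ℝ)) ≠ 0 := by
      intro h; rw [h] at hprod; simp at hprod
    have hb' : (-ν + (2*(k:ℝ)+1)) ≠ 0 := by
      intro h; rw [h] at hprod; simp at hprod
    have h1' : (-1:ℝ)^(2*k) = 1 := by
      rw [pow_mul]; norm_num
    have h2' : (-1:ℝ)^(2*k+1) = -1 := by
      rw [pow_succ, pow_mul]; norm_num
    push_cast
    rw [h1', h2']
    have key : 1 / (-ν + 2*(k:ℝ)) + (-1) / (-ν + (2*(k:ℝ)+1))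
        = 1 / ((-ν + 2*(k:ℝ)) * (-ν + (2*(k:ℝ)+1))) := by
      field_simp
      ring
    rw [key]
    positivity
  have hstep : ∀ n : ℕ, S n < S (n+1) := by
    intro n
    have h2n : 2*(n+1) = (2*n + 1) + 1 := by ring
    simp only [hSdef, h2n, Finset.sum_range_succ]
    have := hpair n
    linarith
  have hmono : Monotone S := monotone_nat_of_le_succ fun n => (hstep n).le
  have htend : Tendsto S atTop (nhds b) := by
    apply hb.comp
    exact tendsto_atTop_atTop_of_monotone (fun a b h => by omega) (fun n => ⟨n, by omega⟩)
  have hle : S 1 ≤ b :=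
    ge_of_tendsto htend (eventually_atTop.2 ⟨1, fun n hn => hmono hn⟩)
  have hS0 : S 0 = 0 := by simp [hSdef]
  have : 0 < S 1 := by
    have := hstep 0
    linarith
  linarith
end

section
/- For every positive integer M and every real ν with 2M−2 < ν < 2M−1, the series β(−ν) = Σ_{k=0}^∞ (−1)^k/(−ν + k) is negative. -/
open Filter Finset

theorem beta_neg_of_mem_even_odd_interval (M : ℕ) (hM : 1 ≤ M) (ν : ℝ)
    (h1 : 2 * (M : ℝ) - 2 < ν) (h2 : ν < 2 * (M : ℝ) - 1) (b : ℝ)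
    (hb : Tendsto (fun N => ∑ k ∈ Finset.range N, (-1 : ℝ) ^ k / (-ν + k))
      atTop (nhds b)) : b < 0 := by
  have hM1 : (1:ℝ) ≤ M := by exact_mod_cast hM
  have hν0 : 0 < ν := by linarith
  have key : ∀ n : ℕ, ∑ k ∈ Finset.range (2*n+1), (-1:ℝ)^k / (-ν + k) ≤ -1/ν := by
    intro n
    induction n with
    | zero => simp [neg_div, div_eq_mul_inv, inv_neg]
    | succ n ih =>
      have hne : ν ≠ (2*n+1 : ℝ) := by
        intro h
        have hA : (2*M:ℝ) < 2*n+3 := by linarith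
        have hB : (2*n+2:ℝ) < 2*M := by linarith
        have hA' : 2*M < 2*n+3 := by exact_mod_cast hA
        have hB' : 2*n+2 < 2*M := by exact_mod_cast hB
        omega
      have hab : 0 < ((2*n+1:ℝ) - ν) * ((2*n+2:ℝ) - ν) := by
        rcases lt_or_gt_of_ne hne with h | h
        · have ha : 0 < (2*n+1:ℝ) - ν := by linarith
          have hb' : 0 < (2*n+2:ℝ) - ν := by linarith
          positivity
        · -- ν > 2n+1, then 2n+1 < 2M-1 so 2n+2 ≤ 2M-2 < ν
          have hC : (2*n+1:ℝ) < 2*M - 1 := lt_trans h h2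
          have hC2 : (2*n+2:ℝ) < 2*M := by linarith
          have hC' : 2*n+2 < 2*M := by exact_mod_cast hC2
          have hC'' : 2*n+2 ≤ 2*M - 2 := by omega
          have hCr : (2*n+2:ℝ) ≤ 2*M - 2 := by
            have : ((2*n+2:ℕ):ℝ) ≤ ((2*M-2:ℕ):ℝ) := by exact_mod_cast hC''
            push_cast [Nat.cast_sub (by omega : 2 ≤ 2*M)] at this
            linarith
          have hb' : (2*n+2:ℝ) - ν < 0 := by linarith
          have ha : (2*n+1:ℝ) - ν < 0 := by linarith
          exact mul_pos_of_neg_of_neg ha hb'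
      have ha0 : (2*n+1:ℝ) - ν ≠ 0 := by
        intro h; exact hne (by linarith)
      have hb0 : (2*n+2:ℝ) - ν ≠ 0 := by
        intro h
        rw [sub_eq_zero] at h
        rw [← h] at hab
        simp [sub_self] at hab
      have pair : (-1:ℝ)^(2*n+1) / (-ν + ((2*n+1:ℕ):ℝ))
          + (-1:ℝ)^(2*n+2) / (-ν + ((2*n+2:ℕ):ℝ)) ≤ 0 := by
        have e1 : (-1:ℝ)^(2*n+1) = -1 := by
          rw [pow_succ, pow_mul]; norm_num
        have e2 : (-1:ℝ)^(2*n+2) = 1 := by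
          rw [pow_succ, pow_succ, pow_mul]; norm_num
        have c1 : (-ν + ((2*n+1:ℕ):ℝ)) = (2*n+1:ℝ) - ν := by push_cast; ring
        have c2 : (-ν + ((2*n+2:ℕ):ℝ)) = (2*n+2:ℝ) - ν := by push_cast; ring
        rw [e1, e2, c1, c2]
        have hrw : (-1:ℝ) / ((2*n+1:ℝ) - ν) + 1 / ((2*n+2:ℝ) - ν)
            = -1 / (((2*n+1:ℝ) - ν) * ((2*n+2:ℝ) - ν)) := by
          rw [div_add_div _ _ ha0 hb0]
          ring
        rw [hrw]
        have : 0 < (((2*n+1:ℝ) - ν) * ((2*n+2:ℝ) - ν)) := hab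
        have h10 : (-1:ℝ) ≤ 0 := by norm_num
        exact div_nonpos_of_nonpos_of_nonneg h10 (le_of_lt this)
      have hsplit : 2*(n+1)+1 = (2*n+1) + 1 + 1 := by ring
      rw [hsplit, Finset.sum_range_succ, Finset.sum_range_succ]
      have h22 : 2*n+1+1 = 2*n+2 := by ring
      rw [h22]
      linarith [ih, pair]
  have hmono : Tendsto (fun n : ℕ => 2*n+1) atTop atTop :=
    tendsto_atTop_atTop.2 fun m => ⟨m, fun n hn => by omega⟩
  have hsub : Tendsto (fun n : ℕ => ∑ k ∈ Finset.range (2*n+1), (-1:ℝ)^k / (-ν + k))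
      atTop (nhds b) := hb.comp hmono
  have hle : b ≤ -1/ν := le_of_tendsto hsub (Filter.Eventually.of_forall key)
  have : -1/ν < 0 := by
    have := one_div_pos.mpr hν0
    simp only [neg_div]
    linarith
  linarith
end

section
/- For every real ν that is not a nonnegative integer, the sign of Γ(−ν) equals the sign of β(−ν); in particular Γ(−ν)·β(−ν) > 0. -/
open Filter Finset Real

lemma alt_sum_nonneg (c : ℕ → ℝ) (hpos : ∀ j, 0 ≤ c j) (hmono : ∀ j, c (j+1) ≤ c j)
    (n : ℕ) : 0 ≤ ∑ j ∈ Finset.range n, (-1:ℝ)^j * c j := by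
  have heven : ∀ m, 0 ≤ ∑ j ∈ Finset.range (2*m), (-1:ℝ)^j * c j := by
    intro m
    induction m with
    | zero => simp
    | succ m ih =>
      have h : 2 * (m+1) = (2*m) + 1 + 1 := by ring
      rw [h, Finset.sum_range_succ, Finset.sum_range_succ]
      have h1 : ((-1:ℝ))^(2*m) = 1 := by rw [pow_mul]; norm_num
      have h2 : ((-1:ℝ))^(2*m+1) = -1 := by rw [pow_succ, h1]; ring
      rw [h1, h2]
      have := hmono (2*m)
      nlinarith [ih]
  rcases Nat.even_or_odd n with ⟨m, hm⟩ | ⟨m, hm⟩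
  · subst hm
    have := heven m
    rwa [two_mul] at this
  · subst hm
    rw [Finset.sum_range_succ]
    have h1 : ((-1:ℝ))^(2*m) = 1 := by rw [pow_mul]; norm_num
    rw [h1, one_mul]
    have := heven m
    have := hpos (2*m)
    linarith

lemma alt_series_limit_pos (y : ℝ) (hy : 0 < y) (L : ℝ)
    (hL : Tendsto (fun N => ∑ k ∈ Finset.range N, (-1:ℝ)^k / (y + k)) atTop (nhds L)) :
    0 < L := by
  set S : ℕ → ℝ := fun N => ∑ k ∈ Finset.range N, (-1:ℝ)^k / (y + k) with hS
  have hy' : ∀ k : ℕ, 0 < y + k := fun k => by positivity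
  have hstep : ∀ N, S (N + 1) = S N + (-1:ℝ)^N / (y + N) := by
    intro N; simp [hS, Finset.sum_range_succ]
  have key : ∀ m, S 2 ≤ S (2*m + 2) := by
    intro m
    induction m with
    | zero => simp
    | succ m ih =>
      have h : 2*(m+1) + 2 = (2*m+2) + 1 + 1 := by ring
      have e1 := hstep (2*m+2)
      have e2 := hstep (2*m+2+1)
      have h1 : ((-1:ℝ))^(2*m+2) = 1 := by rw [pow_add, pow_mul]; norm_num
      have h2 : ((-1:ℝ))^(2*m+2+1) = -1 := by rw [pow_succ, h1]; ring
      rw [h1] at e1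
      rw [h2, neg_div] at e2
      have hp1 := hy' (2*m+2)
      have hle : 1/(y + ((2*m+2+1 : ℕ):ℝ)) ≤ 1/(y + ((2*m+2 : ℕ):ℝ)) := by
        apply one_div_le_one_div_of_le hp1
        push_cast; linarith
      rw [h, e2, e1]
      linarith
  have hm2 : Tendsto (fun m : ℕ => 2*m + 2) atTop atTop :=
    tendsto_atTop_mono (f := id) (fun m => by simp only [id_eq]; omega) tendsto_id
  have hsub : Tendsto (fun m : ℕ => S (2*m + 2)) atTop (nhds L) := hL.comp hm2
  have hS2 : 0 < S 2 := by
    have e : S 2 = 1/(y+0) - 1/(y+1) := by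
      simp only [hS]
      rw [Finset.sum_range_succ, Finset.sum_range_succ, Finset.sum_range_zero]
      push_cast
      ring
    have h1 : 1/(y+1) < 1/(y+0) :=
      one_div_lt_one_div_of_lt (by linarith) (by linarith)
    rw [e]; linarith
  have : S 2 ≤ L := ge_of_tendsto' hsub key
  linarith

lemma Gamma_shift (x : ℝ) (n : ℕ) (h : ∀ k : ℕ, k < n → x + k ≠ 0) :
    Real.Gamma (x + n) = (∏ k ∈ Finset.range n, (x + k)) * Real.Gamma x := by
  induction n with
  | zero => simp
  | succ n ih =>
    have hx : x + n ≠ 0 := h n (Nat.lt_succ_self n)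
    have e : x + ((n:ℕ)+1 : ℕ) = (x + n) + 1 := by push_cast; ring
    rw [e, Real.Gamma_add_one hx, ih (fun k hk => h k (Nat.lt_succ_of_lt hk)),
      Finset.prod_range_succ]
    ring

theorem gamma_beta_same_sign (ν : ℝ) (hν : ∀ n : ℕ, ν ≠ n) (b : ℝ)
    (hb : Tendsto (fun N => ∑ k ∈ Finset.range N, (-1 : ℝ) ^ k / (-ν + k))
      atTop (nhds b)) : 0 < Real.Gamma (-ν) * b := by
  have hν0 : ν ≠ 0 := by simpa using hν 0
  rcases lt_or_gt_of_ne hν0 with hneg | hpos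
  · -- ν < 0
    have hx : 0 < -ν := by linarith
    have hb' : 0 < b := alt_series_limit_pos (-ν) hx b hb
    exact mul_pos (Real.Gamma_pos_of_pos hx) hb'
  · -- ν > 0
    set n := ⌈ν⌉₊ with hn
    have hn1 : 1 ≤ n := Nat.one_le_ceil_iff.mpr hpos
    have hlt : ν < n := lt_of_le_of_ne (Nat.le_ceil ν) (hν n)
    have hgt : (n:ℝ) - 1 < ν := by
      have h1 : (n - 1 : ℕ) < ⌈ν⌉₊ := by omega
      have h2 : ((n - 1 : ℕ) : ℝ) < ν := Nat.lt_ceil.mp h1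
      rwa [Nat.cast_sub hn1, Nat.cast_one] at h2
    set y : ℝ := -ν + n with hy
    have hy0 : 0 < y := by rw [hy]; linarith
    have hy1 : y < 1 := by rw [hy]; linarith
    have hsq : ((-1:ℝ))^n * ((-1:ℝ))^n = 1 := by
      rw [← pow_add]; exact Even.neg_one_pow ⟨n, rfl⟩
    set f : ℕ → ℝ := fun k => (-1:ℝ)^k / (-ν + k) with hf
    set F : ℝ := ∑ k ∈ Finset.range n, f k with hF
    set t : ℕ → ℝ := fun M => ∑ k ∈ Finset.range M, (-1:ℝ)^k / (y + k) with ht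
    have step : ∀ M, ∑ k ∈ Finset.range (n + M), f k = F + (-1:ℝ)^n * t M := by
      intro M
      rw [Finset.sum_range_add, ← hF, ht, Finset.mul_sum]
      congr 1
      apply Finset.sum_congr rfl
      intro k _
      have hden : -ν + ((n:ℝ) + k) = y + k := by rw [hy]; ring
      simp only [hf]
      push_cast
      rw [pow_add, mul_div_assoc, hden]
    have h1 : Tendsto (fun M => ∑ k ∈ Finset.range (n + M), f k) atTop (nhds b) := by
      have hm : Tendsto (fun M : ℕ => n + M) atTop atTop :=
        tendsto_atTop_mono (f := id) (fun m => Nat.le_add_left m n) tendsto_id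
      exact hb.comp hm
    have h2 : Tendsto t atTop (nhds ((-1:ℝ)^n * (b - F))) := by
      have h3 := (h1.sub (tendsto_const_nhds (x := F))).const_mul ((-1:ℝ)^n)
      have h4 : (fun M => (-1:ℝ)^n * ((∑ k ∈ Finset.range (n + M), f k) - F)) = t := by
        funext M
        rw [step M]
        have e : (-1:ℝ)^n * (F + (-1:ℝ)^n * t M - F) = ((-1:ℝ)^n * (-1:ℝ)^n) * t M := by
          ring
        rw [e, hsq, one_mul]
      rwa [h4] at h3
    have hL : 0 < (-1:ℝ)^n * (b - F) := alt_series_limit_pos y hy0 _ h2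
    -- (-1)^n * F ≥ 0
    have hFnn : 0 ≤ (-1:ℝ)^n * F := by
      set c : ℕ → ℝ := fun j => 1 / ((j:ℝ) + 1 - y) with hc
      have hcden : ∀ j : ℕ, 0 < (j:ℝ) + 1 - y := by
        intro j
        have : (0:ℝ) ≤ j := j.cast_nonneg
        linarith
      have key : (-1:ℝ)^n * F = ∑ j ∈ Finset.range n, (-1:ℝ)^j * c j := by
        rw [hF, Finset.mul_sum]
        rw [← Finset.sum_range_reflect (fun k => (-1:ℝ)^n * f k) n]
        apply Finset.sum_congr rfl
        intro j hj
        have hjn : j < n := Finset.mem_range.mp hj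
        have hcast : ((n - 1 - j : ℕ) : ℝ) = (n:ℝ) - 1 - (j:ℝ) := by
          rw [Nat.sub_sub, Nat.cast_sub (by omega : 1 + j ≤ n)]
          push_cast; ring
        have hpow : (-1:ℝ)^n = (-1:ℝ)^(n-1-j) * (-1:ℝ)^(j+1) := by
          rw [← pow_add, (by omega : n - 1 - j + (j+1) = n)]
        have hss : (-1:ℝ)^(n-1-j) * (-1:ℝ)^(n-1-j) = 1 := by
          rw [← pow_add]; exact Even.neg_one_pow ⟨n-1-j, rfl⟩
        have hden : -ν + ((n:ℝ) - 1 - (j:ℝ)) = -((j:ℝ) + 1 - y) := by rw [hy]; ring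
        simp only [hf, hc]
        rw [hcast, hden, hpow]
        have hD : (j:ℝ) + 1 - y ≠ 0 := ne_of_gt (hcden j)
        rw [div_neg]
        trans ((-1:ℝ)^(n-1-j) * (-1:ℝ)^(n-1-j)) * -((-1:ℝ)^(j+1) / ((j:ℝ) + 1 - y))
        · ring
        rw [hss, one_mul, pow_succ]
        field_simp
      rw [key]
      apply alt_sum_nonneg
      · intro j
        have := hcden j
        positivity
      · intro j
        apply one_div_le_one_div_of_le (hcden j)
        push_cast; linarith
    -- gamma sign
    have hne : ∀ k : ℕ, k < n → -ν + (k:ℝ) ≠ 0 := by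
      intro k hk
      have h1 : (k:ℝ) + 1 ≤ (n:ℝ) := by exact_mod_cast hk
      have h2 : (k:ℝ) < ν := by linarith
      intro hcon; linarith
    have hGy := Gamma_shift (-ν) n hne
    have hQ : 0 < (-1:ℝ)^n * ∏ k ∈ Finset.range n, (-ν + (k:ℝ)) := by
      have e : (-1:ℝ)^n * ∏ k ∈ Finset.range n, (-ν + (k:ℝ)) =
          ∏ k ∈ Finset.range n, (ν - (k:ℝ)) := by
        have ep : (-1:ℝ)^n = ∏ _k ∈ Finset.range n, (-1:ℝ) := by
          rw [Finset.prod_const, Finset.card_range]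
        rw [ep, ← Finset.prod_mul_distrib]
        apply Finset.prod_congr rfl
        intro k _; ring
      rw [e]
      apply Finset.prod_pos
      intro k hk
      have hk' : k < n := Finset.mem_range.mp hk
      have h1 : (k:ℝ) + 1 ≤ (n:ℝ) := by exact_mod_cast hk'
      linarith
    have hGypos : 0 < Real.Gamma (-ν + (n:ℝ)) := by
      rw [← hy]; exact Real.Gamma_pos_of_pos hy0
    have hGam : 0 < (-1:ℝ)^n * Real.Gamma (-ν) := by
      have hmul : ((-1:ℝ)^n * ∏ k ∈ Finset.range n, (-ν + (k:ℝ))) *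
          ((-1:ℝ)^n * Real.Gamma (-ν)) = Real.Gamma (-ν + (n:ℝ)) := by
        rw [hGy, mul_mul_mul_comm, hsq, one_mul]
      have hpos' := hGypos
      rw [← hmul] at hpos'
      rcases mul_pos_iff.mp hpos' with ⟨_, h⟩ | ⟨h, _⟩
      · exact h
      · linarith
    have hbpos : 0 < (-1:ℝ)^n * b := by
      have e : (-1:ℝ)^n * b = (-1:ℝ)^n * F + (-1:ℝ)^n * (b - F) := by ring
      linarith
    have hfin := mul_pos hGam hbpos
    rwa [mul_mul_mul_comm, hsq, one_mul] at hfin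
end

section
/- The function y(ν) = Γ((1−ν)/2)/Γ(−ν/2) is strictly decreasing on the interval (−∞, 1). -/
open Real

/-- `y ν = Γ((1-ν)/2) / Γ(-ν/2)`. -/
noncomputable def y (ν : ℝ) : ℝ := Real.Gamma ((1 - ν) / 2) / Real.Gamma (-ν / 2)

section aux
open Set MeasureTheory

noncomputable def Br (x : ℝ) : ℝ := ∫ t in (0:ℝ)..1, t ^ (x - 1) * (1 - t) ^ (-(1/2) : ℝ)

lemma Br_integrableOn {x : ℝ} (hx : 0 < x) :
    IntegrableOn (fun t : ℝ => t ^ (x - 1) * (1 - t) ^ (-(1/2) : ℝ)) (Ioc 0 1) := by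
  have h := (Complex.betaIntegral_convergent (u := (x:ℂ)) (v := (1/2 : ℂ))
    (by simpa using hx) (by norm_num)).1
  have h2 := h.re
  have h3 : IntegrableOn
      (fun t : ℝ => ((t:ℂ) ^ ((x:ℂ) - 1) * (1 - (t:ℂ)) ^ ((1/2:ℂ) - 1)).re) (Ioc 0 1) := h2
  refine h3.congr_fun (fun t ht => ?_) measurableSet_Ioc
  have ht0 : (0:ℝ) ≤ t := ht.1.le
  have ht1 : (0:ℝ) ≤ 1 - t := by linarith [ht.2]
  beta_reduce
  rw [show ((x:ℂ) - 1) = ((x - 1 : ℝ) : ℂ) by push_cast; ring,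
    show ((1/2 : ℂ) - 1) = ((-(1/2) : ℝ) : ℂ) by push_cast; ring,
    show ((1:ℂ) - (t:ℂ)) = ((1 - t : ℝ) : ℂ) by push_cast; ring,
    ← Complex.ofReal_cpow ht0, ← Complex.ofReal_cpow ht1, ← Complex.ofReal_mul,
    Complex.ofReal_re]

lemma Br_eq {x : ℝ} (hx : 0 < x) :
    Real.Gamma x * Real.Gamma (1/2) = Real.Gamma (x + 1/2) * Br x := by
  have h := Complex.Gamma_mul_Gamma_eq_betaIntegral (s := (x:ℂ)) (t := (1/2 : ℂ))
    (by simpa using hx) (by norm_num)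
  have hbeta : Complex.betaIntegral (x:ℂ) (1/2 : ℂ) = ((Br x : ℝ) : ℂ) := by
    rw [Complex.betaIntegral, Br, ← intervalIntegral.integral_ofReal]
    refine intervalIntegral.integral_congr (fun t ht => ?_)
    rw [uIcc_of_le (by norm_num : (0:ℝ) ≤ 1)] at ht
    have ht0 : (0:ℝ) ≤ t := ht.1
    have ht1 : (0:ℝ) ≤ 1 - t := by linarith [ht.2]
    rw [show ((x:ℂ) - 1) = ((x - 1 : ℝ) : ℂ) by push_cast; ring,
      show ((1/2 : ℂ) - 1) = ((-(1/2) : ℝ) : ℂ) by push_cast; ring,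
      show ((1:ℂ) - (t:ℂ)) = ((1 - t : ℝ) : ℂ) by push_cast; ring,
      ← Complex.ofReal_cpow ht0, ← Complex.ofReal_cpow ht1, ← Complex.ofReal_mul]
  rw [hbeta, show (x:ℂ) + (1/2:ℂ) = ((x + 1/2 : ℝ) : ℂ) by push_cast; ring,
    Complex.Gamma_ofReal, Complex.Gamma_ofReal,
    show ((1:ℂ)/2) = ((1/2 : ℝ) : ℂ) by push_cast; ring, Complex.Gamma_ofReal] at h
  exact_mod_cast h

lemma Br_anti {a b : ℝ} (ha : 0 < a) (hab : a < b) : Br b < Br a := by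
  have hIa := Br_integrableOn ha
  have hIb := Br_integrableOn (ha.trans hab)
  have key : 0 < ∫ t in Ioc (0:ℝ) 1,
      (t ^ (a - 1) * (1 - t) ^ (-(1/2):ℝ) - t ^ (b - 1) * (1 - t) ^ (-(1/2):ℝ)) := by
    rw [setIntegral_pos_iff_support_of_nonneg_ae]
    · refine lt_of_lt_of_le (by norm_num : (0:ENNReal) < 1) ?_
      have hsub : Ioo (0:ℝ) 1 ⊆ Function.support
          (fun t => t ^ (a - 1) * (1 - t) ^ (-(1/2):ℝ) - t ^ (b - 1) * (1 - t) ^ (-(1/2):ℝ))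
          ∩ Ioc 0 1 := by
        intro t ht
        have h1 : t ^ (b-1) < t ^ (a-1) :=
          Real.rpow_lt_rpow_of_exponent_gt ht.1 ht.2 (by linarith)
        have h2 : (0:ℝ) < (1 - t) ^ (-(1/2):ℝ) :=
          Real.rpow_pos_of_pos (by linarith [ht.2]) _
        constructor
        · simp only [Function.mem_support]
          nlinarith
        · exact ⟨ht.1, ht.2.le⟩
      calc (1:ENNReal) = volume (Ioo (0:ℝ) 1) := by simp
        _ ≤ _ := measure_mono hsub
    · refine (ae_restrict_iff' measurableSet_Ioc).mpr (ae_of_all _ (fun t ht => ?_))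
      have h1 : t ^ (b-1) ≤ t ^ (a-1) :=
        Real.rpow_le_rpow_of_exponent_ge ht.1 ht.2 (by linarith)
      have h2 : (0:ℝ) ≤ (1 - t) ^ (-(1/2):ℝ) := Real.rpow_nonneg (by linarith [ht.2]) _
      simpa using sub_nonneg.mpr (mul_le_mul_of_nonneg_right h1 h2)
    · exact hIa.sub hIb
  rw [integral_sub hIa hIb] at key
  have e1 : Br a = ∫ t in Ioc (0:ℝ) 1, t ^ (a - 1) * (1 - t) ^ (-(1/2):ℝ) :=
    intervalIntegral.integral_of_le (by norm_num)
  have e2 : Br b = ∫ t in Ioc (0:ℝ) 1, t ^ (b - 1) * (1 - t) ^ (-(1/2):ℝ) :=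
    intervalIntegral.integral_of_le (by norm_num)
  rw [e1, e2]; linarith

lemma key_gamma {a b : ℝ} (ha : 0 < a) (hab : a < b) :
    Real.Gamma b * Real.Gamma (a+1/2) < Real.Gamma a * Real.Gamma (b+1/2) := by
  have hBa := Br_eq ha
  have hBb := Br_eq (ha.trans hab)
  have hlt := Br_anti ha hab
  have pA := Real.Gamma_pos_of_pos (show 0 < a+1/2 by linarith)
  have pB := Real.Gamma_pos_of_pos (show 0 < b+1/2 by linarith)
  have ph := Real.Gamma_pos_of_pos (show 0 < (1:ℝ)/2 by norm_num)
  have h : Real.Gamma b * Real.Gamma (a+1/2) * Real.Gamma (1/2)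
      < Real.Gamma a * Real.Gamma (b+1/2) * Real.Gamma (1/2) := by
    calc Real.Gamma b * Real.Gamma (a+1/2) * Real.Gamma (1/2)
        = Real.Gamma (a+1/2) * (Real.Gamma b * Real.Gamma (1/2)) := by ring
      _ = Real.Gamma (a+1/2) * (Real.Gamma (b+1/2) * Br b) := by rw [hBb]
      _ < Real.Gamma (a+1/2) * (Real.Gamma (b+1/2) * Br a) := by nlinarith [mul_pos pA pB]
      _ = Real.Gamma (b+1/2) * (Real.Gamma (a+1/2) * Br a) := by ring
      _ = Real.Gamma (b+1/2) * (Real.Gamma a * Real.Gamma (1/2)) := by rw [← hBa]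
      _ = Real.Gamma a * Real.Gamma (b+1/2) * Real.Gamma (1/2) := by ring
  exact lt_of_mul_lt_mul_right h ph.le

lemma gamma_neg_of_neg {x : ℝ} (h1 : -(1/2) < x) (h2 : x < 0) : Real.Gamma x < 0 := by
  have hne : x ≠ 0 := h2.ne
  have h3 : Real.Gamma (x+1) = x * Real.Gamma x := Real.Gamma_add_one hne
  have h4 : 0 < Real.Gamma (x+1) := Real.Gamma_pos_of_pos (by linarith)
  nlinarith

lemma G_strictMono {x1 x2 : ℝ} (h1 : -(1/2) < x1) (h12 : x1 < x2) :
    Real.Gamma (x1+1/2) / Real.Gamma x1 < Real.Gamma (x2+1/2) / Real.Gamma x2 := by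
  rcases lt_trichotomy x1 0 with hx1 | hx1 | hx1
  · rcases lt_trichotomy x2 0 with hx2 | hx2 | hx2
    · -- both negative
      have p1 := Real.Gamma_pos_of_pos (show 0 < x1+1/2 by linarith)
      have p2 := Real.Gamma_pos_of_pos (show 0 < x2+1/2 by linarith)
      have q1 := Real.Gamma_pos_of_pos (show 0 < x1+1 by linarith)
      have q2 := Real.Gamma_pos_of_pos (show 0 < x2+1 by linarith)
      have hk := key_gamma (show 0 < x1+1/2 by linarith) (show x1+1/2 < x2+1/2 by linarith)
      rw [show x1+1/2+1/2 = x1+1 by ring, show x2+1/2+1/2 = x2+1 by ring] at hk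
      have e1 : Real.Gamma x1 = Real.Gamma (x1+1) / x1 :=
        (eq_div_iff hx1.ne).mpr (by rw [Real.Gamma_add_one hx1.ne]; ring)
      have e2 : Real.Gamma x2 = Real.Gamma (x2+1) / x2 :=
        (eq_div_iff hx2.ne).mpr (by rw [Real.Gamma_add_one hx2.ne]; ring)
      rw [e1, e2, div_div_eq_mul_div, div_div_eq_mul_div, div_lt_div_iff₀ q1 q2]
      nlinarith [mul_lt_mul_of_neg_left hk hx1,
        mul_lt_mul_of_pos_right h12 (mul_pos p2 q1)]
    · -- x2 = 0
      subst hx2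
      rw [Real.Gamma_zero, div_zero]
      exact div_neg_of_pos_of_neg
        (Real.Gamma_pos_of_pos (by linarith)) (gamma_neg_of_neg h1 hx1)
    · -- x1 < 0 < x2
      exact lt_trans
        (div_neg_of_pos_of_neg (Real.Gamma_pos_of_pos (by linarith))
          (gamma_neg_of_neg h1 hx1))
        (div_pos (Real.Gamma_pos_of_pos (by linarith)) (Real.Gamma_pos_of_pos hx2))
  · subst hx1
    rw [Real.Gamma_zero, div_zero]
    exact div_pos (Real.Gamma_pos_of_pos (by linarith)) (Real.Gamma_pos_of_pos h12)
  · have hx2 : 0 < x2 := hx1.trans h12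
    rw [div_lt_div_iff₀ (Real.Gamma_pos_of_pos hx1) (Real.Gamma_pos_of_pos hx2)]
    have := key_gamma hx1 h12
    nlinarith

end aux

theorem y_strictAnti_Iio_one : StrictAntiOn y (Set.Iio 1) := by
  intro ν1 h1 ν2 h2 hlt
  have h2' : ν2 < 1 := h2
  unfold y
  rw [show (1 - ν1) / 2 = -ν1/2 + 1/2 by ring, show (1 - ν2) / 2 = -ν2/2 + 1/2 by ring]
  exact G_strictMono (by linarith) (by linarith)
end

section
/- The function y(ν) = Γ((1−ν)/2)/Γ(−ν/2) is strictly decreasing on each interval (2M−1, 2M+1) for M = 1, 2, 3, …. -/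
open Real

/-- The digamma function as derivative of `log ∘ Γ`. -/
noncomputable def psi (x : ℝ) : ℝ := deriv (Real.log ∘ Real.Gamma) x

lemma gamma_diffAt {x : ℝ} (hx : 0 < x) : DifferentiableAt ℝ Real.Gamma x :=
  Real.differentiableAt_Gamma (fun m => by
    have : (0:ℝ) ≤ m := Nat.cast_nonneg m
    intro h; rw [h] at hx; linarith)

lemma logGamma_hasDerivAt {x : ℝ} (hx : 0 < x) :
    HasDerivAt (Real.log ∘ Real.Gamma) (psi x) x := by
  have hd : DifferentiableAt ℝ (Real.log ∘ Real.Gamma) x :=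
    (gamma_diffAt hx).log (Real.Gamma_pos_of_pos hx).ne'
  exact hd.hasDerivAt

lemma psi_mono : MonotoneOn psi (Set.Ioi 0) :=
  Real.convexOn_log_Gamma.monotoneOn_deriv (fun x hx =>
    (gamma_diffAt hx).log (Real.Gamma_pos_of_pos hx).ne')

lemma psi_add_one {x : ℝ} (hx : 0 < x) : psi (x + 1) = psi x + 1 / x := by
  have h1 : HasDerivAt (fun t => (Real.log ∘ Real.Gamma) (t + 1)) (psi (x + 1) * 1) x :=
    by have := (logGamma_hasDerivAt (by linarith : (0:ℝ) < x + 1)).comp x ((hasDerivAt_id x).add_const 1); exact this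
  have h2 : HasDerivAt (fun t => Real.log t + (Real.log ∘ Real.Gamma) t) (x⁻¹ + psi x) x :=
    (Real.hasDerivAt_log hx.ne').add (logGamma_hasDerivAt hx)
  have h3 : (fun t => (Real.log ∘ Real.Gamma) (t + 1))
      =ᶠ[nhds x] (fun t => Real.log t + (Real.log ∘ Real.Gamma) t) := by
    filter_upwards [eventually_gt_nhds hx] with t ht
    simp only [Function.comp]
    rw [Real.Gamma_add_one ht.ne', Real.log_mul ht.ne' (Real.Gamma_pos_of_pos ht).ne']
  have h4 : HasDerivAt (fun t => Real.log t + (Real.log ∘ Real.Gamma) t) (psi (x + 1) * 1) x :=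
    h1.congr_of_eventuallyEq h3.symm
  have := h4.unique h2
  rw [mul_one] at this
  rw [this]; rw [one_div]; ring

/-- Auxiliary function equal to `y` on each interval `(2M-1, 2M+1)`. -/
noncomputable def F (ν : ℝ) : ℝ :=
  -Real.tan (π * ν / 2) *
    Real.exp (Real.log (Real.Gamma (ν / 2 + 1)) - Real.log (Real.Gamma (ν / 2 + 1 / 2)))

lemma cos_ne_zero_of_mem {M : ℕ} {ν : ℝ}
    (hν : ν ∈ Set.Ioo (2 * (M : ℝ) - 1) (2 * (M : ℝ) + 1)) :
    Real.cos (π * ν / 2) ≠ 0 := by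
  intro h
  rw [Real.cos_eq_zero_iff] at h
  obtain ⟨k, hk⟩ := h
  have hπ : (0:ℝ) < π := Real.pi_pos
  have hν' : ν = 2 * k + 1 := by
    have := hk
    field_simp at this
    nlinarith [this]
  obtain ⟨h1, h2⟩ := hν
  rw [hν'] at h1 h2
  have e1 : (2 * (M:ℤ) - 1 : ℤ) < 2 * k + 1 := by exact_mod_cast h1
  have e2 : (2 * k + 1 : ℤ) < 2 * (M:ℤ) + 1 := by exact_mod_cast h2
  omega

lemma y_eq_F {M : ℕ} {ν : ℝ}
    (hν : ν ∈ Set.Ioo (2 * (M : ℝ) - 1) (2 * (M : ℝ) + 1)) : y ν = F ν := by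
  have hπ : (0:ℝ) < π := Real.pi_pos
  have hcos : Real.cos (π * ν / 2) ≠ 0 := cos_ne_zero_of_mem hν
  obtain ⟨h1, h2⟩ := hν
  by_cases hνM : ν = 2 * (M : ℝ)
  · -- both sides vanish
    have hy : y ν = 0 := by
      have : -ν / 2 = -(M:ℝ) := by rw [hνM]; ring
      rw [y, this, Real.Gamma_neg_nat_eq_zero, div_zero]
    have htan : Real.tan (π * ν / 2) = 0 := by
      have h := Real.tan_int_mul_pi_div_two (2 * (M:ℤ))
      have e : ((2 * (M:ℤ) : ℤ) : ℝ) * π / 2 = π * ν / 2 := by push_cast; rw [hνM]; ring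
      rw [e] at h; exact h
    rw [hy, F, htan, neg_zero, zero_mul]
  · -- use the reflection formula
    have hsin : Real.sin (π * ν / 2) ≠ 0 := by
      intro h
      rw [Real.sin_eq_zero_iff] at h
      obtain ⟨n, hn⟩ := h
      have hν' : ν = 2 * n := by
        field_simp at hn
        nlinarith [hn]
      rw [hν'] at h1 h2
      have e1 : (2 * (M:ℤ) - 1 : ℤ) < 2 * n := by exact_mod_cast h1
      have e2 : (2 * n : ℤ) < 2 * (M:ℤ) + 1 := by exact_mod_cast h2
      have : n = (M:ℤ) := by omega
      apply hνM
      rw [hν', this]; push_cast; ring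
    have hG1 : 0 < Real.Gamma (ν / 2 + 1) := Real.Gamma_pos_of_pos (by linarith)
    have hG2 : 0 < Real.Gamma (ν / 2 + 1 / 2) := by
      apply Real.Gamma_pos_of_pos
      have hM0 : (0:ℝ) ≤ (M:ℝ) := Nat.cast_nonneg M
      linarith
    -- reflection at -ν/2
    have R1 : Real.Gamma (-(ν/2)) * Real.Gamma (1 + ν/2) = -(π / Real.sin (π * ν / 2)) := by
      have := Real.Gamma_mul_Gamma_one_sub (-(ν/2))
      have e : (1 : ℝ) - -(ν/2) = 1 + ν/2 := by ring
      have e2 : π * -(ν/2) = -(π * ν / 2) := by ring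
      rw [e, e2, Real.sin_neg, div_neg] at this
      exact this
    -- reflection at 1/2 + ν/2
    have R2 : Real.Gamma (1/2 + ν/2) * Real.Gamma (1/2 - ν/2) = π / Real.cos (π * ν / 2) := by
      have := Real.Gamma_mul_Gamma_one_sub (1/2 + ν/2)
      have e : (1 : ℝ) - (1/2 + ν/2) = 1/2 - ν/2 := by ring
      have e2 : π * (1/2 + ν/2) = π * ν / 2 + π / 2 := by ring
      rw [e, e2, Real.sin_add_pi_div_two] at this
      exact this
    have hGA' : Real.Gamma (1 + ν/2) ≠ 0 := by
      have e : ν/2 + 1 = 1 + ν/2 := by ring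
      rw [← e]; exact hG1.ne'
    have hGB' : Real.Gamma (1/2 + ν/2) ≠ 0 := by
      have e : ν/2 + 1/2 = 1/2 + ν/2 := by ring
      rw [← e]; exact hG2.ne'
    have hGneg : Real.Gamma (-(ν/2)) = -(π / Real.sin (π * ν / 2)) / Real.Gamma (1 + ν/2) := by
      rw [eq_div_iff hGA']; exact R1
    have hGhalf : Real.Gamma (1/2 - ν/2) = (π / Real.cos (π * ν / 2)) / Real.Gamma (1/2 + ν/2) := by
      rw [eq_div_iff hGB', mul_comm]; exact R2
    have ey : (1 - ν) / 2 = 1/2 - ν/2 := by ring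
    have ey2 : -ν / 2 = -(ν/2) := by ring
    have eA : ν / 2 + 1 = 1 + ν/2 := by ring
    have eB : ν / 2 + 1/2 = 1/2 + ν/2 := by ring
    rw [y, F, ey, ey2, hGneg, hGhalf, eA, eB,
      Real.exp_sub, Real.exp_log (by rw [← eA]; exact hG1), Real.exp_log (by rw [← eB]; exact hG2),
      Real.tan_eq_sin_div_cos]
    have hGA : Real.Gamma (1 + ν/2) ≠ 0 := by rw [← eA]; exact hG1.ne'
    have hGB : Real.Gamma (1/2 + ν/2) ≠ 0 := by rw [← eB]; exact hG2.ne'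
    set S := Real.sin (π * ν / 2) with hS
    set C := Real.cos (π * ν / 2) with hC
    set A := Real.Gamma (1 + ν/2) with hA
    set B := Real.Gamma (1/2 + ν/2) with hB
    have hp : (π:ℝ) ≠ 0 := Real.pi_ne_zero
    field_simp

lemma F_hasDerivAt {ν : ℝ} (hcos : Real.cos (π * ν / 2) ≠ 0) (hν : 1 < ν) :
    HasDerivAt F
      (-(1 / Real.cos (π * ν / 2) ^ 2 * (π / 2)) *
          Real.exp (Real.log (Real.Gamma (ν / 2 + 1)) - Real.log (Real.Gamma (ν / 2 + 1 / 2))) +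
        -Real.tan (π * ν / 2) *
          (Real.exp (Real.log (Real.Gamma (ν / 2 + 1)) - Real.log (Real.Gamma (ν / 2 + 1 / 2))) *
            (psi (ν / 2 + 1) * (1 / 2) - psi (ν / 2 + 1 / 2) * (1 / 2)))) ν := by
  have hlin : HasDerivAt (fun x : ℝ => π * x / 2) (π / 2) ν := by
    simpa using (((hasDerivAt_id ν).const_mul π).div_const 2)
  have htan : HasDerivAt (fun x => Real.tan (π * x / 2)) (1 / Real.cos (π * ν / 2) ^ 2 * (π / 2)) ν :=
    by have := (Real.hasDerivAt_tan hcos).comp ν hlin; exact this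
  have hin1 : HasDerivAt (fun x : ℝ => x / 2 + 1) ((1:ℝ)/2) ν := by
    simpa using ((hasDerivAt_id ν).div_const 2).add_const 1
  have hin2 : HasDerivAt (fun x : ℝ => x / 2 + 1/2) ((1:ℝ)/2) ν := by
    simpa using ((hasDerivAt_id ν).div_const 2).add_const (1/2)
  have hu : HasDerivAt (fun x => Real.log (Real.Gamma (x / 2 + 1))) (psi (ν/2+1) * (1/2)) ν :=
    by have := (logGamma_hasDerivAt (by linarith : (0:ℝ) < ν/2+1)).comp ν hin1; exact this
  have hv : HasDerivAt (fun x => Real.log (Real.Gamma (x / 2 + 1/2))) (psi (ν/2+1/2) * (1/2)) ν :=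
    by have := (logGamma_hasDerivAt (by linarith : (0:ℝ) < ν/2+1/2)).comp ν hin2; exact this
  have hexp : HasDerivAt
      (fun x => Real.exp (Real.log (Real.Gamma (x / 2 + 1)) - Real.log (Real.Gamma (x / 2 + 1/2))))
      (Real.exp (Real.log (Real.Gamma (ν / 2 + 1)) - Real.log (Real.Gamma (ν / 2 + 1 / 2))) *
        (psi (ν/2+1) * (1/2) - psi (ν/2+1/2) * (1/2))) ν :=
    (hu.sub hv).exp
  exact (htan.neg.mul hexp)

lemma F_deriv_neg {ν : ℝ} (hcos : Real.cos (π * ν / 2) ≠ 0) (hν : 1 < ν) :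
    deriv F ν < 0 := by
  have hd := F_hasDerivAt hcos hν
  rw [hd.deriv]
  set E := Real.exp (Real.log (Real.Gamma (ν / 2 + 1)) - Real.log (Real.Gamma (ν / 2 + 1 / 2))) with hE
  set t := Real.tan (π * ν / 2) with ht
  have hEpos : 0 < E := Real.exp_pos _
  have hc2 : 1 / Real.cos (π * ν / 2) ^ 2 = 1 + t ^ 2 := by
    rw [one_div, ← Real.inv_one_add_tan_sq hcos, inv_inv]
  set c := psi (ν / 2 + 1) * (1 / 2) - psi (ν / 2 + 1 / 2) * (1 / 2) with hcdef
  have hc0 : 0 ≤ c := by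
    have := psi_mono (Set.mem_Ioi.mpr (by linarith : (0:ℝ) < ν/2+1/2))
      (Set.mem_Ioi.mpr (by linarith : (0:ℝ) < ν/2+1)) (by linarith)
    rw [hcdef]; linarith
  have hc1 : c < 1 := by
    have hadd : psi (ν/2 + 1) = psi (ν/2) + 1 / (ν/2) := psi_add_one (by linarith)
    have hmono : psi (ν/2) ≤ psi (ν/2 + 1/2) :=
      psi_mono (Set.mem_Ioi.mpr (by linarith : (0:ℝ) < ν/2))
        (Set.mem_Ioi.mpr (by linarith : (0:ℝ) < ν/2+1/2)) (by linarith)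
    have hb : 1 / (ν/2) < 2 := by
      rw [div_lt_iff₀ (by linarith : (0:ℝ) < ν/2)]
      linarith
    rw [hcdef]
    nlinarith [hadd, hmono, hb]
  rw [hc2]
  clear_value E t c
  have hπ : (3:ℝ) < π := Real.pi_gt_three
  have hA : 0 < (1 + t ^ 2) * (π / 2) := by nlinarith [sq_nonneg t]
  have hAE : 0 < (1 + t ^ 2) * (π / 2) * E := mul_pos hA hEpos
  rcases le_or_gt 0 t with htpos | htneg
  · have h1 : -((1 + t ^ 2) * (π / 2)) * E < 0 := by nlinarith [hAE]
    have h2 : -t * (E * c) ≤ 0 := by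
      apply mul_nonpos_of_nonpos_of_nonneg
      · linarith
      · positivity
    linarith
  · have key : -t * (E * c) < (1 + t ^ 2) * (π / 2) * E := by
      have hEc : E * c < E := by
        rcases lt_or_eq_of_le hc0 with h | h
        · calc E * c < E * 1 := (mul_lt_mul_iff_right₀ hEpos).mpr hc1
            _ = E := mul_one E
        · rw [← h, mul_zero]; exact hEpos
      have s1 : -t * (E * c) < -t * E := mul_lt_mul_of_pos_left hEc (neg_pos.mpr htneg)
      have k2 : 0 ≤ (1 + t ^ 2) * (π / 2) + t := by
        nlinarith [mul_nonneg (by linarith : (0:ℝ) ≤ π / 2) (sq_nonneg (1 + t))]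
      have s2 : -t * E ≤ (1 + t ^ 2) * (π / 2) * E := by
        nlinarith [mul_nonneg k2 hEpos.le]
      linarith
    linarith

theorem y_strictAnti_Ioo (M : ℕ) (hM : 1 ≤ M) :
    StrictAntiOn y (Set.Ioo (2 * (M : ℝ) - 1) (2 * (M : ℝ) + 1)) := by
  have hM1 : (1:ℝ) ≤ (M:ℝ) := by exact_mod_cast hM
  have hF : StrictAntiOn F (Set.Ioo (2 * (M : ℝ) - 1) (2 * (M : ℝ) + 1)) := by
    apply strictAntiOn_of_deriv_neg (convex_Ioo _ _)
    · intro x hx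
      have hcos := cos_ne_zero_of_mem (M := M) hx
      have hx1 : 1 < x := by
        obtain ⟨h1, _⟩ := hx; linarith
      exact (F_hasDerivAt hcos hx1).differentiableAt.continuousAt.continuousWithinAt
    · intro x hx
      rw [interior_Ioo] at hx
      have hcos := cos_ne_zero_of_mem (M := M) hx
      have hx1 : 1 < x := by
        obtain ⟨h1, _⟩ := hx; linarith
      exact F_deriv_neg hcos hx1
  intro a ha b hb hab
  rw [y_eq_F ha, y_eq_F hb]
  exact hF ha hb hab
end
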